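/- Let G be an abelian group, the 'block monoid' B(G) the set of finite sequences over G (elements of the free abelian monoid ℱ(G)) whose sum is zero. Then B(G) is half-factorial if and only if |G| ≤ 2. -/

import Mathlib

/-- The sum `σ(S)` of a sequence `S` over `G` (an element of the free abelian
monoid `ℱ(G) = G →₀ ℕ`). -/
def seqSum {G : Type*} [AddCommGroup G] (S : G →₀ ℕ) : G :=
  S.sum fun g n => n • g

/-- The block monoid `B(G)` of zero-sum sequences over `G`. -/
def BlockSet (G : Type*) [AddCommGroup G] : Set (G →₀ ℕ) :=
  {S | seqSum S = 0}

/-- `S` is an atom of `B(G)`. -/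
def BlockAtom {G : Type*} [AddCommGroup G] (S : G →₀ ℕ) : Prop :=
  S ∈ BlockSet G ∧ S ≠ 0 ∧
    ∀ u v : G →₀ ℕ, u ∈ BlockSet G → v ∈ BlockSet G → S = u + v →
      u = 0 ∨ v = 0

namespace Stmt18Aux

open Finsupp

variable {G : Type*} [AddCommGroup G]

lemma seqSum_single (a : G) (n : ℕ) : seqSum (Finsupp.single a n) = n • a := by
  simp [seqSum]

lemma seqSum_add (u v : G →₀ ℕ) : seqSum (u + v) = seqSum u + seqSum v := by
  classical
  unfold seqSum
  apply Finsupp.sum_add_index <;> intros <;> simp [add_smul]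

lemma seqSum_zero : seqSum (0 : G →₀ ℕ) = 0 := by simp [seqSum]

lemma mem_block {S : G →₀ ℕ} : S ∈ BlockSet G ↔ seqSum S = 0 := Iff.rfl

/-- total mass of a sequence -/
def mass (S : G →₀ ℕ) : ℕ := S.sum fun _ n => n

lemma mass_add (u v : G →₀ ℕ) : mass (u + v) = mass u + mass v :=
  Finsupp.sum_add_index' (by simp) (by simp)

lemma mass_pos {v : G →₀ ℕ} (h : v ≠ 0) : 0 < mass v := by
  obtain ⟨g, hg⟩ := Finsupp.ne_iff.mp h
  simp only [Finsupp.coe_zero, Pi.zero_apply] at hg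
  have hmem : g ∈ v.support := Finsupp.mem_support_iff.mpr hg
  have : v g ≤ mass v := Finset.single_le_sum (fun _ _ => Nat.zero_le _) hmem
  omega

/-- B(G) is always atomic. -/
lemma exists_fact (S : G →₀ ℕ) (hS : S ∈ BlockSet G) (h0 : S ≠ 0) :
    ∃ l : List (G →₀ ℕ), (∀ x ∈ l, BlockAtom x) ∧ S = l.sum := by
  generalize hn : mass S = n
  induction n using Nat.strong_induction_on generalizing S with
  | _ n ih =>
    by_cases hA : BlockAtom S
    · exact ⟨[S], by simp [hA], by simp⟩
    · have hdec : ∃ u v : G →₀ ℕ, u ∈ BlockSet G ∧ v ∈ BlockSet G ∧ S = u + v ∧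
          u ≠ 0 ∧ v ≠ 0 := by
        unfold BlockAtom at hA
        push_neg at hA
        obtain ⟨u, v, hu, hv, he, h1, h2⟩ := hA hS h0
        exact ⟨u, v, hu, hv, he, h1, h2⟩
      obtain ⟨u, v, hu, hv, he, hu0, hv0⟩ := hdec
      have hmass : mass S = mass u + mass v := by rw [he, mass_add]
      have hmu : mass u < n := by have := mass_pos hv0; omega
      have hmv : mass v < n := by have := mass_pos hu0; omega
      obtain ⟨l1, hl1, he1⟩ := ih _ hmu u hu hu0 rfl
      obtain ⟨l2, hl2, he2⟩ := ih _ hmv v hv hv0 rfl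
      refine ⟨l1 ++ l2, ?_, ?_⟩
      · intro x hx
        rcases List.mem_append.mp hx with h | h
        · exact hl1 x h
        · exact hl2 x h
      · rw [List.sum_append, he, he1, he2]

/-- minimality criterion for atoms -/
lemma atom_of_min {S : G →₀ ℕ} (hS : seqSum S = 0) (h0 : S ≠ 0)
    (hmin : ∀ u : G →₀ ℕ, (∀ g, u g ≤ S g) → seqSum u = 0 → u = 0 ∨ u = S) :
    BlockAtom S := by
  refine ⟨hS, h0, fun u v hu hv he => ?_⟩
  rcases hmin u (fun g => by rw [he]; simp) hu with h | h
  · exact Or.inl h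
  · right
    subst h
    exact (left_eq_add.mp he)

lemma eq_pair {a b : G} (hab : a ≠ b) {m n : ℕ} {u : G →₀ ℕ}
    (h : ∀ g, u g ≤ (Finsupp.single a m + Finsupp.single b n) g) :
    ∃ i ≤ m, ∃ j ≤ n, u = Finsupp.single a i + Finsupp.single b j := by
  refine ⟨u a, ?_, u b, ?_, ?_⟩
  · have := h a
    simpa [Finsupp.single_eq_of_ne' (Ne.symm hab)] using this
  · have := h b
    simpa [Finsupp.single_eq_of_ne' hab] using this
  · ext g
    by_cases hga : g = a
    · subst hga
      simp [Finsupp.single_eq_of_ne' (Ne.symm hab)]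
    · by_cases hgb : g = b
      · subst hgb
        simp [Finsupp.single_eq_of_ne' hab]
      · have := h g
        simp only [Finsupp.add_apply,
          Finsupp.single_eq_of_ne' (fun hh => hga hh.symm),
          Finsupp.single_eq_of_ne' (fun hh => hgb hh.symm)] at this ⊢
        omega

lemma eq_triple {a b c : G} (hab : a ≠ b) (hac : a ≠ c) (hbc : b ≠ c) {u : G →₀ ℕ}
    (h : ∀ g, u g ≤ (Finsupp.single a 1 + Finsupp.single b 1 + Finsupp.single c 1 : G →₀ ℕ) g) :
    ∃ i ≤ 1, ∃ j ≤ 1, ∃ l ≤ 1,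
      u = Finsupp.single a i + Finsupp.single b j + Finsupp.single c l := by
  refine ⟨u a, ?_, u b, ?_, u c, ?_, ?_⟩
  · have := h a
    simpa [Finsupp.single_eq_of_ne' (Ne.symm hab), Finsupp.single_eq_of_ne' (Ne.symm hac)]
      using this
  · have := h b
    simpa [Finsupp.single_eq_of_ne' hab, Finsupp.single_eq_of_ne' (Ne.symm hbc)] using this
  · have := h c
    simpa [Finsupp.single_eq_of_ne' hac, Finsupp.single_eq_of_ne' hbc] using this
  · ext g
    by_cases hga : g = a
    · subst hga
      simp [Finsupp.single_eq_of_ne' (Ne.symm hab), Finsupp.single_eq_of_ne' (Ne.symm hac)]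
    · by_cases hgb : g = b
      · subst hgb
        simp [Finsupp.single_eq_of_ne' hab, Finsupp.single_eq_of_ne' (Ne.symm hbc)]
      · by_cases hgc : g = c
        · subst hgc
          simp [Finsupp.single_eq_of_ne' hac, Finsupp.single_eq_of_ne' hbc]
        · have := h g
          simp only [Finsupp.add_apply,
            Finsupp.single_eq_of_ne' (fun hh => hga hh.symm),
            Finsupp.single_eq_of_ne' (fun hh => hgb hh.symm),
            Finsupp.single_eq_of_ne' (fun hh => hgc hh.symm)] at this ⊢
          omega

/-- `x^n` is an atom when `n` is minimal with `n • x = 0`. -/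
lemma atom_single {x : G} (hx : x ≠ 0) {n : ℕ} (hn : 0 < n) (h1 : n • x = 0)
    (h2 : ∀ i, 0 < i → i < n → i • x ≠ 0) : BlockAtom (Finsupp.single x n) := by
  apply atom_of_min (by simp [seqSum_single, h1])
    (by simp [Finsupp.single_eq_zero]; omega)
  intro u hu hsum
  obtain ⟨i, hi, j, hj, hu1⟩ := eq_pair (b := (0:G)) (m := n) (n := 0) hx
    (fun g => by simpa using hu g)
  interval_cases j
  rw [Finsupp.single_zero, add_zero] at hu1
  rw [hu1, seqSum_single] at hsum
  rcases Nat.eq_zero_or_pos i with h | h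
  · left; rw [hu1, h, Finsupp.single_zero]
  · rcases lt_or_eq_of_le hi with h' | h'
    · exact absurd hsum (h2 _ h h')
    · right; rw [hu1, h']

lemma atom_pair_one {x : G} (hx : x ≠ 0) (hxx : x + x ≠ 0) :
    BlockAtom (Finsupp.single x 1 + Finsupp.single (-x) 1) := by
  have hne : x ≠ -x := by
    intro h
    apply hxx
    nth_rewrite 2 [h]
    simp
  apply atom_of_min
  · simp [seqSum_add, seqSum_single]
  · intro h
    have := DFunLike.congr_fun h x
    simp [Finsupp.single_eq_of_ne (Ne.symm hne)] at this
  · intro u hu hsum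
    obtain ⟨i, hi, j, hj, hu1⟩ := eq_pair hne hu
    rw [hu1, seqSum_add, seqSum_single, seqSum_single] at hsum
    interval_cases i <;> interval_cases j <;>
      simp only [zero_smul, one_smul, zero_add, add_zero] at hsum
    · left; rw [hu1]; simp
    · exact absurd (neg_eq_zero.mp hsum) hx
    · exact absurd hsum hx
    · right; rw [hu1]

lemma nsmul_inj {x : G} (hord : addOrderOf x = 0) {a b : ℕ} (h : a • x = b • x) :
    a = b := by
  have hmin := addOrderOf_eq_zero_iff'.mp hord
  rcases le_total a b with hab | hab
  · by_contra hne
    apply hmin (b - a) (by omega)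
    have heq : (b - a) • x + a • x = b • x := by
      rw [← add_nsmul]
      congr 1
      omega
    rw [h] at heq
    nth_rewrite 2 [← zero_add (b • x)] at heq
    exact add_right_cancel heq
  · by_contra hne
    apply hmin (a - b) (by omega)
    have heq : (a - b) • x + b • x = a • x := by
      rw [← add_nsmul]
      congr 1
      omega
    rw [← h] at heq
    nth_rewrite 2 [← zero_add (a • x)] at heq
    exact add_right_cancel heq

lemma atom_inf {x : G} (hord : addOrderOf x = 0) :
    BlockAtom (Finsupp.single (2 • x) 1 + Finsupp.single (-x) 2) := by
  have hmin := addOrderOf_eq_zero_iff'.mp hord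
  have hx : x ≠ 0 := by
    intro h
    exact hmin 1 one_pos (by simp [h])
  have hne : 2 • x ≠ -x := by
    intro h
    apply hmin 3 (by omega)
    have h3 : (3 : ℕ) • x = 2 • x + x := by
      have he : (3 : ℕ) = 2 + 1 := rfl
      rw [he, add_nsmul, one_nsmul]
    rw [h3, h]
    simp
  apply atom_of_min
  · simp [seqSum_add, seqSum_single]
  · intro h
    have := DFunLike.congr_fun h (-x)
    simp [Finsupp.single_eq_of_ne hne] at this
  · intro u hu hsum
    obtain ⟨i, hi, j, hj, hu1⟩ := eq_pair hne hu
    rw [hu1, seqSum_add, seqSum_single, seqSum_single] at hsum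
    have hkey : (2 * i) • x = j • x := by
      have e1 : i • (2 • x) = (2 * i) • x := by
        rw [smul_smul, mul_comm]
      have e2 : j • (-x : G) = -(j • x) := by simp
      rw [e1, e2] at hsum
      exact add_neg_eq_zero.mp hsum
    have hij := nsmul_inj hord hkey
    interval_cases i
    · have : j = 0 := by omega
      subst this
      left
      rw [hu1]
      simp
    · have : j = 2 := by omega
      subst this
      right
      rw [hu1]

lemma atom_triple {g h k : G} (hg : g ≠ 0) (hh : h ≠ 0) (hk : k ≠ 0)
    (hgh : g ≠ h) (hgk : g ≠ k) (hhk : h ≠ k) (hsum : g + h + k = 0) :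
    BlockAtom (Finsupp.single g 1 + Finsupp.single h 1 + Finsupp.single k 1) := by
  apply atom_of_min
  · simp [seqSum_add, seqSum_single, hsum]
  · intro hcon
    have := DFunLike.congr_fun hcon g
    simp [Finsupp.single_eq_of_ne (Ne.symm hgh), Finsupp.single_eq_of_ne (Ne.symm hgk)]
      at this
  · intro u hu hsum'
    obtain ⟨i, hi, j, hj, l, hl, hu1⟩ := eq_triple hgh hgk hhk hu
    rw [hu1, seqSum_add, seqSum_add, seqSum_single, seqSum_single, seqSum_single] at hsum'
    interval_cases i <;> interval_cases j <;> interval_cases l <;>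
      simp only [zero_smul, one_smul, zero_add, add_zero] at hsum'
    · left; rw [hu1]; simp
    · exact absurd hsum' hk
    · exact absurd hsum' hh
    · exact absurd (by rwa [add_assoc, hsum', add_zero] at hsum : g = 0) hg
    · exact absurd hsum' hg
    · exact absurd (by rwa [add_right_comm, hsum', zero_add] at hsum : h = 0) hh
    · exact absurd (by rwa [hsum', zero_add] at hsum : k = 0) hk
    · right; rw [hu1]

open Classical in
/-- weight function used for the length argument when `|G| ≤ 2` -/
noncomputable def phi (S : G →₀ ℕ) : ℕ := S.sum fun g n => if g = 0 then 2 * n else n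

lemma phi_add (u v : G →₀ ℕ) : phi (u + v) = phi u + phi v :=
  Finsupp.sum_add_index' (fun _ => by split <;> simp) (fun _ m n => by split <;> ring)

open Classical in
lemma phi_single (a : G) (n : ℕ) : phi (Finsupp.single a n) = if a = 0 then 2 * n else n := by
  unfold phi
  rw [Finsupp.sum_single_index]
  split <;> simp

lemma phi_atom (hsmall : ∀ a b : G, a = 0 ∨ b = 0 ∨ a = b) {S : G →₀ ℕ}
    (hA : BlockAtom S) : phi S = 2 := by
  obtain ⟨hmem, h0, hdec⟩ := hA
  by_cases hS0 : S 0 = 0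
  · -- S is supported away from 0
    obtain ⟨g, hg⟩ := Finsupp.ne_iff.mp h0
    simp only [Finsupp.coe_zero, Pi.zero_apply] at hg
    have hgne : g ≠ 0 := by rintro rfl; exact hg hS0
    have hSg : S = Finsupp.single g (S g) := by
      ext g'
      by_cases hgg : g' = g
      · subst hgg; simp
      · rw [Finsupp.single_eq_of_ne' (fun hh => hgg hh.symm)]
        by_cases hg0 : g' = 0
        · subst hg0; exact hS0
        · rcases hsmall g g' with h | h | h
          · exact absurd h hgne
          · exact absurd h hg0
          · exact absurd h.symm hgg
    have hgg0 : g + g = 0 := by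
      rcases hsmall g (g + g) with h | h | h
      · exact absurd h hgne
      · exact h
      · exact absurd (right_eq_add.mp h) hgne
    have heven : ∀ m : ℕ, m % 2 = 0 → m • g = 0 := by
      intro m hm
      obtain ⟨c, hc⟩ : ∃ c, m = c + c := ⟨m / 2, by omega⟩
      rw [hc, add_nsmul, ← smul_add, hgg0, smul_zero]
    set n := S g with hn
    have hn0 : n ≠ 0 := hg
    have hsum : n • g = 0 := by
      have := hmem
      rw [mem_block, hSg, seqSum_single] at this
      exact this
    have hne : n % 2 = 0 := by
      by_contra hodd
      have h1 : n % 2 = 1 := by omega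
      obtain ⟨c, hc⟩ : ∃ c, n = (c + c) + 1 := ⟨n / 2, by omega⟩
      rw [hc, add_nsmul, one_nsmul] at hsum
      rw [show (c + c) • g = 0 from heven _ (by omega), zero_add] at hsum
      exact hgne hsum
    have hn2 : n = 2 := by
      by_contra hc
      have h4 : 4 ≤ n := by omega
      have hdecomp : S = Finsupp.single g 2 + Finsupp.single g (n - 2) := by
        rw [hSg, ← Finsupp.single_add]
        congr 1
        omega
      rcases hdec (Finsupp.single g 2) (Finsupp.single g (n - 2))
          (by rw [mem_block, seqSum_single]; exact heven 2 rfl)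
          (by rw [mem_block, seqSum_single]; exact heven _ (by omega))
          hdecomp with h | h
      · rw [Finsupp.single_eq_zero] at h; omega
      · rw [Finsupp.single_eq_zero] at h; omega
    rw [hSg, phi_single, if_neg hgne]
    exact hn2
  · -- S contains a 0, and then S = single 0 1
    have hle : Finsupp.single (0:G) 1 ≤ S := by
      rw [Finsupp.le_def]
      intro g
      by_cases hg : g = 0
      · subst hg; simp; omega
      · rw [Finsupp.single_eq_of_ne' (fun hh => hg hh.symm)]; omega
    have hT : S = Finsupp.single 0 1 + (S - Finsupp.single 0 1) :=
      (add_tsub_cancel_of_le hle).symm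
    have hTmem : (S - Finsupp.single 0 1) ∈ BlockSet G := by
      have := hmem
      rw [mem_block] at this ⊢
      rw [hT, seqSum_add, seqSum_single, smul_zero, zero_add] at this
      exact this
    rcases hdec (Finsupp.single 0 1) (S - Finsupp.single 0 1)
        (by rw [mem_block, seqSum_single, smul_zero]) hTmem hT with h | h
    · rw [Finsupp.single_eq_zero] at h; omega
    · rw [h, add_zero] at hT
      rw [hT, phi_single, if_pos rfl]

lemma phi_list (hsmall : ∀ a b : G, a = 0 ∨ b = 0 ∨ a = b) (l : List (G →₀ ℕ))
    (hl : ∀ x ∈ l, BlockAtom x) : phi l.sum = 2 * l.length := by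
  induction l with
  | nil => simp [phi]
  | cons a t ih =>
    rw [List.sum_cons, phi_add, phi_atom hsmall (hl a (by simp)),
      ih (fun x hx => hl x (List.mem_cons_of_mem a hx)), List.length_cons]
    ring

lemma card_le_two (hsmall : ∀ a b : G, a = 0 ∨ b = 0 ∨ a = b) :
    Cardinal.mk G ≤ 2 := by
  classical
  have hinj : Function.Injective (fun g : G => (ULift.up (decide (g = 0)) : ULift Bool)) := by
    intro a b hab
    simp only [ULift.up_inj, decide_eq_decide] at hab
    by_cases ha : a = 0
    · rw [ha, ← hab.mp ha]
    · have hb : b ≠ 0 := fun hh => ha (hab.mpr hh)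
      rcases hsmall a b with h | h | h
      · exact absurd h ha
      · exact absurd h hb
      · exact h
  have := Cardinal.mk_le_of_injective hinj
  simpa using this

lemma small_of_card (hcard : Cardinal.mk G ≤ 2) :
    ∀ a b : G, a = 0 ∨ b = 0 ∨ a = b := by
  intro a b
  by_contra hc
  push_neg at hc
  obtain ⟨ha, hb, hab⟩ := hc
  classical
  have hinj : Function.Injective
      (fun i : ULift (Fin 3) => if i.down = 0 then (0:G) else if i.down = 1 then a else b) := by
    intro i j hij
    rcases i with ⟨i⟩
    rcases j with ⟨j⟩
    fin_cases i <;> fin_cases j <;> simp_all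
  have h3 := (Cardinal.mk_le_of_injective hinj).trans hcard
  simp at h3
  norm_num at h3

lemma two_single (a : G) : Finsupp.single a 2 = Finsupp.single a 1 + Finsupp.single a 1 := by
  rw [← Finsupp.single_add]

end Stmt18Aux

open Stmt18Aux Finsupp in
/-- `B(G)` is half-factorial if and only if `|G| ≤ 2`.  Half-factorial means:
`B(G)` is atomic and any two factorizations of an element of `B(G)` into atoms
have the same length. -/
theorem stmt_18 {G : Type*} [AddCommGroup G] :
    ((∀ S ∈ BlockSet G, S ≠ 0 →
        ∃ l : List (G →₀ ℕ), (∀ x ∈ l, BlockAtom x) ∧ S = l.sum) ∧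
      ∀ l l' : List (G →₀ ℕ), (∀ x ∈ l, BlockAtom x) → (∀ x ∈ l', BlockAtom x) →
        l.sum = l'.sum → l.length = l'.length) ↔
    Cardinal.mk G ≤ 2 := by
  constructor
  · rintro ⟨hatomic, hlen⟩
    apply card_le_two
    by_contra hc
    push_neg at hc
    obtain ⟨g, h, hg, hh0, hgh⟩ := hc
    by_cases hex : ∃ x : G, x ≠ 0 ∧ x + x ≠ 0
    · obtain ⟨x, hx0, hxx⟩ := hex
      by_cases hord : addOrderOf x = 0
      · -- infinite order: factorization of lengths 2 and 3
        have hmin := addOrderOf_eq_zero_iff'.mp hord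
        have h2x0 : (2:ℕ) • x ≠ 0 := hmin 2 (by omega)
        have h4x0 : (2:ℕ) • x + 2 • x ≠ 0 := by
          rw [← add_nsmul]
          exact hmin 4 (by omega)
        have hP := atom_inf hord
        have hQ := atom_inf (x := -x) (by rwa [addOrderOf_neg])
        rw [neg_neg, smul_neg] at hQ
        have hT := atom_pair_one h2x0 h4x0
        have hU := atom_pair_one hx0 hxx
        have hkey := hlen
          [Finsupp.single (2 • x) 1 + Finsupp.single (-x) 2,
           Finsupp.single (-(2 • x)) 1 + Finsupp.single x 2]
          [Finsupp.single (2 • x) 1 + Finsupp.single (-(2 • x)) 1,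
           Finsupp.single x 1 + Finsupp.single (-x) 1,
           Finsupp.single x 1 + Finsupp.single (-x) 1]
          (by intro y hy; simp only [List.mem_cons, List.not_mem_nil, or_false] at hy
              rcases hy with rfl | rfl
              · exact hP
              · exact hQ)
          (by intro y hy; simp only [List.mem_cons, List.not_mem_nil, or_false] at hy
              rcases hy with rfl | rfl | rfl
              · exact hT
              · exact hU
              · exact hU)
          (by simp only [List.sum_cons, List.sum_nil, add_zero]
              rw [two_single, two_single]
              abel)
        simp at hkey
      · -- finite order n ≥ 3
        set n := addOrderOf x with hn
        have hn1 : n ≠ 1 := fun hh => hx0 (AddMonoid.addOrderOf_eq_one_iff.mp hh)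
        have hn2 : n ≠ 2 := by
          intro hh
          apply hxx
          have := addOrderOf_nsmul_eq_zero x
          rw [← hn, hh, two_nsmul] at this
          exact this
        have hn3 : 3 ≤ n := by omega
        have hordneg : addOrderOf (-x) = n := by rw [addOrderOf_neg]
        have hA1 : BlockAtom (Finsupp.single x n) := by
          apply atom_single hx0 (by omega)
          · rw [hn]; exact addOrderOf_nsmul_eq_zero x
          · intro i hi1 hi2 hcon
            have := Nat.le_of_dvd hi1 (addOrderOf_dvd_of_nsmul_eq_zero hcon)
            omega
        have hA2 : BlockAtom (Finsupp.single (-x) n) := by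
          apply atom_single (neg_ne_zero.mpr hx0) (by omega)
          · rw [← hordneg] at hn3 ⊢
            exact addOrderOf_nsmul_eq_zero (-x)
          · intro i hi1 hi2 hcon
            have := Nat.le_of_dvd hi1 (addOrderOf_dvd_of_nsmul_eq_zero hcon)
            rw [hordneg] at this
            omega
        have hU := atom_pair_one hx0 hxx
        have hkey := hlen
          [Finsupp.single x n, Finsupp.single (-x) n]
          (List.replicate n (Finsupp.single x 1 + Finsupp.single (-x) 1))
          (by intro y hy; simp only [List.mem_cons, List.not_mem_nil, or_false] at hy
              rcases hy with rfl | rfl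
              · exact hA1
              · exact hA2)
          (by intro y hy
              rw [List.eq_of_mem_replicate hy]
              exact hU)
          (by rw [List.sum_replicate, List.sum_cons, List.sum_cons, List.sum_nil, add_zero,
                smul_add, Finsupp.smul_single, Finsupp.smul_single, smul_eq_mul, mul_one])
        simp at hkey
        omega
    · -- every element has order dividing 2
      push_neg at hex
      have hall : ∀ x : G, x + x = 0 := by
        intro x
        by_cases hx : x = 0
        · simp [hx]
        · exact hex x hx
      have hneg : ∀ x : G, -x = x := fun x => neg_eq_of_add_eq_zero_left (hall x)
      set k := g + h with hk
      have hk0 : k ≠ 0 := by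
        intro hh
        rw [hk] at hh
        have h1 := neg_eq_of_add_eq_zero_right hh
        rw [hneg g] at h1
        exact hgh h1
      have hgk : g ≠ k := by
        intro hh
        rw [hk] at hh
        exact hh0 (left_eq_add.mp hh)
      have hhk : h ≠ k := by
        intro hh
        rw [hk] at hh
        exact hg (right_eq_add.mp hh)
      have hsum3 : g + h + k = 0 := by rw [hk]; exact hall (g + h)
      have hAg : BlockAtom (Finsupp.single g 2) := by
        apply atom_single hg (by omega)
        · rw [two_nsmul]; exact hall g
        · intro i h1 h2 hcon
          interval_cases i
          exact hg (by simpa using hcon)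
      have hAh : BlockAtom (Finsupp.single h 2) := by
        apply atom_single hh0 (by omega)
        · rw [two_nsmul]; exact hall h
        · intro i h1 h2 hcon
          interval_cases i
          exact hh0 (by simpa using hcon)
      have hAk : BlockAtom (Finsupp.single k 2) := by
        apply atom_single hk0 (by omega)
        · rw [two_nsmul]; exact hall k
        · intro i h1 h2 hcon
          interval_cases i
          exact hk0 (by simpa using hcon)
      have hW := atom_triple hg hh0 hk0 hgh hgk hhk hsum3
      have hkey := hlen
        [Finsupp.single g 2, Finsupp.single h 2, Finsupp.single k 2]
        [Finsupp.single g 1 + Finsupp.single h 1 + Finsupp.single k 1,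
         Finsupp.single g 1 + Finsupp.single h 1 + Finsupp.single k 1]
        (by intro y hy; simp only [List.mem_cons, List.not_mem_nil, or_false] at hy
            rcases hy with rfl | rfl | rfl
            · exact hAg
            · exact hAh
            · exact hAk)
        (by intro y hy; simp only [List.mem_cons, List.not_mem_nil, or_false] at hy
            rcases hy with rfl | rfl
            · exact hW
            · exact hW)
        (by simp only [List.sum_cons, List.sum_nil, add_zero]
            rw [two_single, two_single, two_single]
            abel)
      simp at hkey
  · intro hcard
    have hsmall := small_of_card hcard
    refine ⟨fun S hS h0 => exists_fact S hS h0, fun l l' hl hl' hsum => ?_⟩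
    have h1 := phi_list hsmall l hl
    have h2 := phi_list hsmall l' hl'
    rw [hsum] at h1
    omega
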